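/- Let $H$ be a bipartite graph with parts $V_1, V_2$ and $\Gamma$ a part-preserving automorphism group with orbits $T_1,\ldots,T_p$ on $V_1$ and $S_1,\ldots,S_q$ on $V_2$. Define the quotient graph $W$ on vertex set $\{T_1,\ldots,T_p\} \cup \{S_1,\ldots,S_q\}$ with $T_i \sim S_j$ iff some edge of $H$ joins $T_i$ to $S_j$, and weight $|T_i|$, $|S_j|$ on each vertex. Then the maximum size of an independent set in $H$ equals the maximum weight of an independent set in $W$. -/

import Mathlib

/-- Lemma 1 restated: the maximum size of an independent set in H equals the
maximum weight of an independent set in the quotient graph W on the orbits of Γ,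
where each orbit is weighted by its cardinality and two orbits are adjacent iff
some edge of H joins them. -/
theorem max_indep_eq_max_orbit_weight
    {V : Type*} [Fintype V] [DecidableEq V] (H : SimpleGraph V) (V₁ : Set V)
    (hbip : ∀ u v, H.Adj u v → (u ∈ V₁ ↔ v ∉ V₁))
    (Γ : Type*) [Group Γ] [MulAction Γ V]
    (hauto : ∀ (γ : Γ) (u v : V), H.Adj u v → H.Adj (γ • u) (γ • v))
    (hpart : ∀ (γ : Γ) (v : V), v ∈ V₁ → γ • v ∈ V₁) :
    sSup {N : ℕ | ∃ I : Finset V, (∀ u ∈ I, ∀ v ∈ I, ¬ H.Adj u v) ∧ I.card = N} =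
      sSup {N : ℕ | ∃ K : Finset (Quotient (MulAction.orbitRel Γ V)),
        (∀ q ∈ K, ∀ r ∈ K, q ≠ r →
          ¬ ∃ u v : V, Quotient.mk (MulAction.orbitRel Γ V) u = q ∧
            Quotient.mk (MulAction.orbitRel Γ V) v = r ∧ H.Adj u v) ∧
        ∑ q ∈ K, Nat.card {v : V // Quotient.mk (MulAction.orbitRel Γ V) v = q} = N} := by
  classical
  set π : V → Quotient (MulAction.orbitRel Γ V) := Quotient.mk (MulAction.orbitRel Γ V) with hπ
  -- basic symmetry facts
  have adj_iff : ∀ (γ : Γ) (u v : V), H.Adj (γ • u) (γ • v) ↔ H.Adj u v := by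
    intro γ u v
    refine ⟨fun h => ?_, hauto γ u v⟩
    have := hauto γ⁻¹ _ _ h
    simpa using this
  have mem_iff : ∀ (γ : Γ) (v : V), γ • v ∈ V₁ ↔ v ∈ V₁ := by
    intro γ v
    refine ⟨fun h => ?_, hpart γ v⟩
    have := hpart γ⁻¹ _ h
    simpa using this
  have orbit_mem : ∀ u v : V, π u = π v → (u ∈ V₁ ↔ v ∈ V₁) := by
    intro u v h
    obtain ⟨γ, hγ⟩ := MulAction.mem_orbit_iff.mp (Quotient.exact h)
    rw [← hγ]; exact mem_iff γ v
  have no_edge_same : ∀ u v : V, π u = π v → ¬ H.Adj u v := by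
    intro u v h hadj
    have h1 := hbip u v hadj
    have h2 := orbit_mem u v h
    tauto
  -- fiber cardinalities
  have fiber_card : ∀ q : Quotient (MulAction.orbitRel Γ V),
      Nat.card {v : V // π v = q} = (Finset.univ.filter (fun v => π v = q)).card := by
    intro q
    rw [Nat.card_eq_fintype_card, Fintype.card_subtype]
  -- boundedness of both sets
  have bddL : BddAbove {N : ℕ | ∃ I : Finset V,
      (∀ u ∈ I, ∀ v ∈ I, ¬ H.Adj u v) ∧ I.card = N} := by
    refine ⟨Fintype.card V, fun N hN => ?_⟩
    obtain ⟨I, _, hc⟩ := hN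
    exact hc ▸ Finset.card_le_univ I
  have bddR : BddAbove {N : ℕ | ∃ K : Finset (Quotient (MulAction.orbitRel Γ V)),
      (∀ q ∈ K, ∀ r ∈ K, q ≠ r →
        ¬ ∃ u v : V, π u = q ∧ π v = r ∧ H.Adj u v) ∧
      ∑ q ∈ K, Nat.card {v : V // π v = q} = N} := by
    refine ⟨Fintype.card V, fun N hN => ?_⟩
    obtain ⟨K, _, hc⟩ := hN
    calc N = ∑ q ∈ K, Nat.card {v : V // π v = q} := hc.symm
      _ ≤ ∑ q : Quotient (MulAction.orbitRel Γ V), Nat.card {v : V // π v = q} := by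
          exact Finset.sum_le_sum_of_subset (Finset.subset_univ K)
      _ = Fintype.card V := by
          simp_rw [fiber_card]
          rw [← Finset.card_univ (α := V)]
          exact (Finset.card_eq_sum_card_fiberwise (fun x _ => Finset.mem_univ (π x))).symm
  apply le_antisymm
  · -- hard direction: α(H) ≤ max orbit weight
    refine csSup_le ⟨0, ⟨∅, by simp, by simp⟩⟩ ?_
    rintro N ⟨I, hI, rfl⟩
    -- setup: V1, V2, neighborhoods, the function f
    set V1 : Finset V := Finset.univ.filter (· ∈ V₁) with hV1
    set V2 : Finset V := Finset.univ.filter (· ∉ V₁) with hV2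
    set nbr : Finset V → Finset V :=
      fun S => Finset.univ.filter (fun v => ∃ u ∈ S, H.Adj u v) with hnbr
    set f : Finset V → ℕ := fun S => S.card + (V2 \ nbr S).card with hf
    -- supermodularity of f
    have supermod : ∀ S T : Finset V, f S + f T ≤ f (S ∪ T) + f (S ∩ T) := by
      intro S T
      have h1 : (S ∪ T).card + (S ∩ T).card = S.card + T.card :=
        Finset.card_union_add_card_inter S T
      have h2 : nbr (S ∪ T) = nbr S ∪ nbr T := by
        ext v; simp only [hnbr, Finset.mem_filter, Finset.mem_union, Finset.mem_univ, true_and]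
        constructor
        · rintro ⟨u, hu | hu, hadj⟩
          · exact Or.inl ⟨u, hu, hadj⟩
          · exact Or.inr ⟨u, hu, hadj⟩
        · rintro (⟨u, hu, hadj⟩ | ⟨u, hu, hadj⟩)
          · exact ⟨u, Or.inl hu, hadj⟩
          · exact ⟨u, Or.inr hu, hadj⟩
      have h3 : nbr (S ∩ T) ⊆ nbr S ∩ nbr T := by
        intro v hv
        simp only [hnbr, Finset.mem_filter, Finset.mem_inter, Finset.mem_univ, true_and] at hv ⊢
        obtain ⟨u, hu, hadj⟩ := hv
        exact ⟨⟨u, hu.1, hadj⟩, ⟨u, hu.2, hadj⟩⟩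
      have h4 : V2 \ nbr (S ∪ T) = (V2 \ nbr S) ∩ (V2 \ nbr T) := by
        rw [h2]; ext v
        simp only [Finset.mem_sdiff, Finset.mem_inter, Finset.mem_union]
        tauto
      have h5 : (V2 \ nbr S) ∪ (V2 \ nbr T) ⊆ V2 \ nbr (S ∩ T) := by
        intro v hv
        simp only [Finset.mem_union, Finset.mem_sdiff] at hv ⊢
        rcases hv with ⟨h, hn⟩ | ⟨h, hn⟩ <;>
          exact ⟨h, fun hmem => hn (by
            have := h3 hmem
            simp only [Finset.mem_inter] at this
            tauto)⟩
      have h6 : ((V2 \ nbr S) ∪ (V2 \ nbr T)).card + ((V2 \ nbr S) ∩ (V2 \ nbr T)).card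
          = (V2 \ nbr S).card + (V2 \ nbr T).card :=
        Finset.card_union_add_card_inter _ _
      have h7 : ((V2 \ nbr S) ∪ (V2 \ nbr T)).card ≤ (V2 \ nbr (S ∩ T)).card :=
        Finset.card_le_card h5
      simp only [hf]
      rw [h4]
      omega
    -- invariance of f under the action
    have act_mem : ∀ (γ : Γ) (S : Finset V) (v : V),
        v ∈ S.image (γ • ·) ↔ γ⁻¹ • v ∈ S := by
      intro γ S v
      simp only [Finset.mem_image]
      constructor
      · rintro ⟨u, hu, rfl⟩; simpa using hu
      · intro h; exact ⟨γ⁻¹ • v, h, by simp⟩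
    have act_card : ∀ (γ : Γ) (S : Finset V), (S.image (γ • ·)).card = S.card := by
      intro γ S
      exact Finset.card_image_of_injective S (MulAction.injective γ)
    have act_f : ∀ (γ : Γ) (S : Finset V), f (S.image (γ • ·)) = f S := by
      intro γ S
      have hV2 : ∀ v : V, v ∈ V2 ↔ γ⁻¹ • v ∈ V2 := by
        intro v
        simp only [hV2, Finset.mem_filter, Finset.mem_univ, true_and]
        rw [← mem_iff γ⁻¹ v]
      have hnb : ∀ v : V, v ∈ nbr (S.image (γ • ·)) ↔ γ⁻¹ • v ∈ nbr S := by
        intro v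
        simp only [hnbr, Finset.mem_filter, Finset.mem_univ, true_and]
        constructor
        · rintro ⟨u, hu, hadj⟩
          rw [act_mem] at hu
          refine ⟨γ⁻¹ • u, hu, ?_⟩
          exact (adj_iff γ _ _).mp (by simpa using hadj)
        · rintro ⟨u, hu, hadj⟩
          refine ⟨γ • u, Finset.mem_image_of_mem _ hu, ?_⟩
          have := hauto γ _ _ hadj
          simpa using this
      have hsd : V2 \ nbr (S.image (γ • ·)) = (V2 \ nbr S).image (γ • ·) := by
        ext v
        rw [act_mem, Finset.mem_sdiff, Finset.mem_sdiff, hV2 v, hnb v]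
      simp only [hf]
      rw [hsd, act_card, act_card]
    -- choose a maximizer of f among subsets of V1, of maximum cardinality
    obtain ⟨S, hS, hSmax⟩ := Finset.exists_max_image V1.powerset
      (fun S => (Fintype.card V + 1) * f S + S.card) ⟨∅, Finset.empty_mem_powerset V1⟩
    have hSsub : S ⊆ V1 := Finset.mem_powerset.mp hS
    have fmax : ∀ T ∈ V1.powerset, f T ≤ f S := by
      intro T hT
      by_contra hc
      push_neg at hc
      have h := hSmax T hT
      have hcard : S.card ≤ Fintype.card V := Finset.card_le_univ S
      have hmul : (Fintype.card V + 1) * (f S + 1) ≤ (Fintype.card V + 1) * f T :=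
        Nat.mul_le_mul_left _ hc
      have hexp : (Fintype.card V + 1) * (f S + 1)
          = (Fintype.card V + 1) * f S + (Fintype.card V + 1) := by ring
      omega
    have cmax : ∀ T ∈ V1.powerset, f T = f S → T.card ≤ S.card := by
      intro T hT hfT
      have h := hSmax T hT
      rw [hfT] at h
      omega
    -- S is Γ-invariant
    have Sinv : ∀ γ : Γ, S.image (γ • ·) = S := by
      intro γ
      have hTsub : S.image (γ • ·) ⊆ V1 := by
        intro v hv
        rw [act_mem] at hv
        have := hSsub hv
        simp only [hV1, Finset.mem_filter, Finset.mem_univ, true_and] at this ⊢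
        rw [← mem_iff γ⁻¹ v]; exact this
      have hTpow : S.image (γ • ·) ∈ V1.powerset := Finset.mem_powerset.mpr hTsub
      have hfT : f (S.image (γ • ·)) = f S := act_f γ S
      have hUpow : S ∪ S.image (γ • ·) ∈ V1.powerset :=
        Finset.mem_powerset.mpr (Finset.union_subset hSsub hTsub)
      have hIpow : S ∩ S.image (γ • ·) ∈ V1.powerset :=
        Finset.mem_powerset.mpr (Finset.inter_subset_left.trans hSsub)
      have h1 : f S + f (S.image (γ • ·)) ≤ f (S ∪ S.image (γ • ·)) + f (S ∩ S.image (γ • ·)) :=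
        supermod S _
      have h2 : f (S ∪ S.image (γ • ·)) ≤ f S := fmax _ hUpow
      have h3 : f (S ∩ S.image (γ • ·)) ≤ f S := fmax _ hIpow
      have h4 : f (S ∪ S.image (γ • ·)) = f S := by omega
      have h5 : (S ∪ S.image (γ • ·)).card ≤ S.card := cmax _ hUpow h4
      have h6 : S ∪ S.image (γ • ·) = S :=
        (Finset.eq_of_subset_of_card_le Finset.subset_union_left h5).symm
      have h7 : S.image (γ • ·) ⊆ S := Finset.union_eq_left.mp h6
      exact Finset.eq_of_subset_of_card_le h7 (by rw [act_card])
    -- the invariant maximum independent set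
    set J : Finset V := S ∪ (V2 \ nbr S) with hJ
    have Jcard : J.card = f S := by
      rw [hJ, Finset.card_union_of_disjoint, hf]
      rw [Finset.disjoint_left]
      intro v hv hv2
      have h1 := hSsub hv
      simp only [hV1, Finset.mem_filter, Finset.mem_univ, true_and] at h1
      have h2 := (Finset.mem_sdiff.mp hv2).1
      simp only [hV2, Finset.mem_filter, Finset.mem_univ, true_and] at h2
      exact h2 h1
    have Jindep : ∀ u ∈ J, ∀ v ∈ J, ¬ H.Adj u v := by
      intro u hu v hv hadj
      rw [hJ, Finset.mem_union] at hu hv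
      have hbuv := hbip u v hadj
      rcases hu with hu | hu <;> rcases hv with hv | hv
      · have h1 := hSsub hu; have h2 := hSsub hv
        simp only [hV1, Finset.mem_filter, Finset.mem_univ, true_and] at h1 h2
        tauto
      · exact (Finset.mem_sdiff.mp hv).2 (by
          simp only [hnbr, Finset.mem_filter, Finset.mem_univ, true_and]
          exact ⟨u, hu, hadj⟩)
      · exact (Finset.mem_sdiff.mp hu).2 (by
          simp only [hnbr, Finset.mem_filter, Finset.mem_univ, true_and]
          exact ⟨v, hv, hadj.symm⟩)
      · have h1 := (Finset.mem_sdiff.mp hu).1; have h2 := (Finset.mem_sdiff.mp hv).1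
        simp only [hV2, Finset.mem_filter, Finset.mem_univ, true_and] at h1 h2
        tauto
    have Jinv : ∀ γ : Γ, J.image (γ • ·) = J := by
      intro γ
      have hnb : nbr (S.image (γ • ·)) = (nbr S).image (γ • ·) := by
        ext v
        rw [act_mem]
        simp only [hnbr, Finset.mem_filter, Finset.mem_univ, true_and]
        constructor
        · rintro ⟨u, hu, hadj⟩
          exact ⟨γ⁻¹ • u, (act_mem γ S u).mp hu, by simpa using hauto γ⁻¹ _ _ hadj⟩
        · rintro ⟨u, hu, hadj⟩
          exact ⟨γ • u, Finset.mem_image_of_mem _ hu, by simpa using hauto γ _ _ hadj⟩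
      have hV2im : V2.image (γ • ·) = V2 := by
        ext v
        rw [act_mem]
        simp only [hV2, Finset.mem_filter, Finset.mem_univ, true_and]
        rw [mem_iff γ⁻¹ v]
      rw [hJ, Finset.image_union,
        Finset.image_sdiff _ _ (MulAction.injective γ), hV2im, ← hnb, Sinv γ]
    have Jfiber : ∀ u v : V, π u = π v → v ∈ J → u ∈ J := by
      intro u v h hv
      obtain ⟨γ, hγ⟩ := MulAction.mem_orbit_iff.mp (Quotient.exact h)
      rw [← hγ, ← Jinv γ]
      exact Finset.mem_image_of_mem _ hv
    -- |I| ≤ f S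
    have hIle : I.card ≤ f S := by
      set A : Finset V := I ∩ V1 with hA
      have hA1 : I \ A ⊆ V2 \ nbr A := by
        intro v hv
        rw [Finset.mem_sdiff] at hv ⊢
        obtain ⟨hvI, hvA⟩ := hv
        constructor
        · simp only [hV2, Finset.mem_filter, Finset.mem_univ, true_and]
          intro hvV1
          exact hvA (Finset.mem_inter.mpr ⟨hvI, by
            simp only [hV1, Finset.mem_filter, Finset.mem_univ, true_and]; exact hvV1⟩)
        · intro hvn
          simp only [hnbr, Finset.mem_filter, Finset.mem_univ, true_and] at hvn
          obtain ⟨u, hu, hadj⟩ := hvn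
          exact hI u (Finset.mem_inter.mp hu).1 v hvI hadj
      have : I.card ≤ A.card + (V2 \ nbr A).card := by
        calc I.card = A.card + (I \ A).card := by
              rw [hA, Finset.sdiff_inter_self_left, Finset.card_inter_add_card_sdiff]
          _ ≤ A.card + (V2 \ nbr A).card := by
              exact Nat.add_le_add_left (Finset.card_le_card hA1) _
      calc I.card ≤ f A := this
        _ ≤ f S := fmax A (Finset.mem_powerset.mpr Finset.inter_subset_right)
    -- the orbit set K
    refine le_trans (le_trans hIle Jcard.ge) (le_csSup bddR ?_)
    refine ⟨J.image π, ?_, ?_⟩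
    · rintro q hq r hr hqr ⟨u, v, hu, hv, hadj⟩
      obtain ⟨u', hu', hqu'⟩ := Finset.mem_image.mp hq
      obtain ⟨v', hv', hrv'⟩ := Finset.mem_image.mp hr
      have huJ : u ∈ J := Jfiber u u' (by rw [hu, ← hqu']) hu'
      have hvJ : v ∈ J := Jfiber v v' (by rw [hv, ← hrv']) hv'
      exact Jindep u huJ v hvJ hadj
    · have h1 : J.card = ∑ q ∈ J.image π, (J.filter (fun v => π v = q)).card :=
        Finset.card_eq_sum_card_fiberwise (fun x hx => Finset.mem_image_of_mem π hx)
      rw [h1]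
      apply Finset.sum_congr rfl
      intro q hq
      rw [fiber_card q]
      congr 1
      ext v
      simp only [Finset.mem_filter, Finset.mem_univ, true_and]
      obtain ⟨u', hu', hqu'⟩ := Finset.mem_image.mp hq
      constructor
      · intro h
        exact ⟨Jfiber v u' (by rw [h, ← hqu']) hu', h⟩
      · exact fun h => h.2
  · -- easy direction
    refine csSup_le ⟨0, ⟨∅, by simp, by simp⟩⟩ ?_
    rintro N ⟨K, hK, rfl⟩
    refine le_csSup bddL ?_
    set I : Finset V := Finset.univ.filter (fun v => π v ∈ K) with hIdef
    refine ⟨I, ?_, ?_⟩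
    · intro u hu v hv hadj
      simp only [hIdef, Finset.mem_filter, Finset.mem_univ, true_and] at hu hv
      by_cases hpq : π u = π v
      · exact no_edge_same u v hpq hadj
      · exact hK (π u) hu (π v) hv hpq ⟨u, v, rfl, rfl, hadj⟩
    · have h1 : I.card = ∑ q ∈ K, (I.filter (fun v => π v = q)).card :=
        Finset.card_eq_sum_card_fiberwise (fun x hx => by
          simp only [hIdef, Finset.mem_coe, Finset.mem_filter, Finset.mem_univ, true_and] at hx
          exact hx)
      rw [h1]
      apply Finset.sum_congr rfl
      intro q hq
      rw [fiber_card q]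
      congr 1
      ext v
      simp only [hIdef, Finset.mem_filter, Finset.mem_univ, true_and]
      constructor
      · exact fun h => h.2
      · intro h; exact ⟨h ▸ hq, h⟩
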